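/- arXiv:2204.10163 — 8 statements merged into one kernel-verified Lean document; each statement's English description precedes it below -/
import Mathlib

section
/- Let Ω ⊆ ℝ² be open with coordinates (x,u) and let F : Ω → ℝ be three times continuously differentiable. Assume that ∂_x∂_u F is nowhere zero on Ω and that ∂_x(∂_u∂_u F − (∂_u F)²) = 0 on Ω (i.e. ∂_u∂_u F − (∂_u F)² depends only on u). Then ∂_u(∂_x∂_u F) = 2 (∂_u F)(∂_x∂_u F) on Ω; equivalently, the function 2F − ln|∂_x∂_u F| has vanishing partial derivative in the direction of u on Ω. -/
/-- Partial derivative in the `x`-direction (first coordinate). -/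
noncomputable def pdX (f : ℝ × ℝ → ℝ) (p : ℝ × ℝ) : ℝ := fderiv ℝ f p (1, 0)

/-- Partial derivative in the `u`-direction (second coordinate). -/
noncomputable def pdU (f : ℝ × ℝ → ℝ) (p : ℝ × ℝ) : ℝ := fderiv ℝ f p (0, 1)

lemma fderiv_fderiv_apply (f : ℝ × ℝ → ℝ) (p : ℝ × ℝ)
    (hf : DifferentiableAt ℝ (fderiv ℝ f) p) (v w : ℝ × ℝ) :
    fderiv ℝ (fun q => fderiv ℝ f q v) p w = fderiv ℝ (fderiv ℝ f) p w v := by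
  have h := ((ContinuousLinearMap.apply ℝ ℝ v).hasFDerivAt.comp p hf.hasFDerivAt).fderiv
  have : (fun q => fderiv ℝ f q v) = (ContinuousLinearMap.apply ℝ ℝ v) ∘ (fderiv ℝ f) := rfl
  rw [this, h]; rfl

/-- If `F` is `C³` on an open set `Ω`, with `∂_x∂_u F` nowhere zero and
`∂_x(∂_u∂_u F − (∂_u F)²) = 0` on `Ω`, then `∂_u(∂_x∂_u F) = 2 (∂_u F)(∂_x∂_u F)` on `Ω`;
equivalently, `2F − ln|∂_x∂_u F|` has vanishing `u`-partial derivative on `Ω`. -/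
theorem stmt_2 (Ω : Set (ℝ × ℝ)) (hΩ : IsOpen Ω) (F : ℝ × ℝ → ℝ)
    (hF : ContDiffOn ℝ 3 F Ω)
    (hFxu : ∀ p ∈ Ω, pdX (pdU F) p ≠ 0)
    (hRic : ∀ p ∈ Ω, pdX (fun q => pdU (pdU F) q - (pdU F q) ^ 2) p = 0) :
    ∀ p ∈ Ω, pdU (pdX (pdU F)) p = 2 * pdU F p * pdX (pdU F) p ∧
      pdU (fun q => 2 * F q - Real.log |pdX (pdU F) q|) p = 0 := by

  -- g := pdU F is C² on Ω
  have hg : ContDiffOn ℝ 2 (pdU F) Ω := by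
    have h1 : ContDiffOn ℝ 2 (fun y => fderiv ℝ F y) Ω :=
      hF.fderiv_of_isOpen hΩ (by norm_num)
    exact h1.clm_apply contDiffOn_const
  -- fderiv (pdU F) is C¹ on Ω
  have hdg : ContDiffOn ℝ 1 (fun y => fderiv ℝ (pdU F) y) Ω :=
    hg.fderiv_of_isOpen hΩ (by norm_num)
  intro p hp
  have hmem : Ω ∈ nhds p := hΩ.mem_nhds hp
  have hgp : ContDiffAt ℝ 2 (pdU F) p := hg.contDiffAt hmem
  have hdg2 : DifferentiableAt ℝ (fderiv ℝ (pdU F)) p :=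
    (hdg.contDiffAt hmem).differentiableAt one_ne_zero
  -- symmetry of second derivative of pdU F
  have hsym := (hgp.isSymmSndFDerivAt (by norm_num)).eq (1, 0) (0, 1)
  -- pdU (pdX (pdU F)) p = pdX (pdU (pdU F)) p
  have key1 : pdU (pdX (pdU F)) p = pdX (pdU (pdU F)) p := by
    show fderiv ℝ (fun q => fderiv ℝ (pdU F) q (1,0)) p (0,1)
        = fderiv ℝ (fun q => fderiv ℝ (pdU F) q (0,1)) p (1,0)
    rw [fderiv_fderiv_apply _ _ hdg2, fderiv_fderiv_apply _ _ hdg2, hsym]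
  -- differentiability at p of pdU (pdU F) and pdU F
  have hdguu : DifferentiableAt ℝ (fun q => pdU (pdU F) q) p := by
    show DifferentiableAt ℝ (fun q => fderiv ℝ (pdU F) q (0,1)) p
    exact hdg2.clm_apply (differentiableAt_const _)
  have hdgF : DifferentiableAt ℝ (pdU F) p :=
    hgp.differentiableAt (by norm_num)
  -- expand the Riccati hypothesis
  have hric := hRic p hp
  have hexp : pdX (fun q => pdU (pdU F) q - (pdU F q) ^ 2) p
      = pdX (pdU (pdU F)) p - 2 * pdU F p * pdX (pdU F) p := by
    show fderiv ℝ (fun q => pdU (pdU F) q - (pdU F q) ^ 2) p (1,0) = _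
    have heq : (fun q => pdU (pdU F) q - (pdU F q) ^ 2)
        = fun q => pdU (pdU F) q - pdU F q * pdU F q := by
      funext q; ring
    rw [heq, fderiv_fun_sub (g := fun q => pdU F q * pdU F q) hdguu (hdgF.mul hdgF), ContinuousLinearMap.sub_apply,
      (hdgF.hasFDerivAt.fun_mul hdgF.hasFDerivAt).fderiv]
    simp only [ContinuousLinearMap.add_apply, ContinuousLinearMap.smul_apply, smul_eq_mul]
    have h1 : fderiv ℝ (pdU F) p (1,0) = pdX (pdU F) p := rfl
    have h2 : fderiv ℝ (fun q => pdU (pdU F) q) p (1,0) = pdX (pdU (pdU F)) p := rfl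
    rw [h1, h2]; ring
  have key2 : pdX (pdU (pdU F)) p = 2 * pdU F p * pdX (pdU F) p := by
    have := hric; rw [hexp] at this; linarith
  have part1 : pdU (pdX (pdU F)) p = 2 * pdU F p * pdX (pdU F) p := key1.trans key2
  refine ⟨part1, ?_⟩
  -- second part
  have habs : (fun q => 2 * F q - Real.log |pdX (pdU F) q|)
      = fun q => 2 * F q - Real.log (pdX (pdU F) q) := by
    funext q; rw [Real.log_abs]
  have hdh : DifferentiableAt ℝ (fun q => pdX (pdU F) q) p := by
    show DifferentiableAt ℝ (fun q => fderiv ℝ (pdU F) q (1,0)) p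
    exact hdg2.clm_apply (differentiableAt_const _)
  have hFd : DifferentiableAt ℝ F p :=
    (hF.contDiffAt hmem).differentiableAt (by norm_num)
  have hne := hFxu p hp
  have hlog : HasFDerivAt (fun q => Real.log (pdX (pdU F) q))
      ((pdX (pdU F) p)⁻¹ • fderiv ℝ (fun q => pdX (pdU F) q) p) p :=
    hdh.hasFDerivAt.log hne
  have hall : HasFDerivAt (fun q => 2 * F q - Real.log (pdX (pdU F) q))
      ((2:ℝ) • fderiv ℝ F p - (pdX (pdU F) p)⁻¹ • fderiv ℝ (fun q => pdX (pdU F) q) p) p :=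
    ((hFd.hasFDerivAt.const_mul 2).sub hlog)
  have hfd := hall.fderiv
  show fderiv ℝ (fun q => 2 * F q - Real.log |pdX (pdU F) q|) p (0,1) = 0
  rw [habs, hfd]
  have hpdu : fderiv ℝ (fun q => pdX (pdU F) q) p (0,1) = pdU (pdX (pdU F)) p := rfl
  simp only [ContinuousLinearMap.sub_apply, ContinuousLinearMap.smul_apply, smul_eq_mul,
    hpdu, part1]
  have : fderiv ℝ F p (0,1) = pdU F p := rfl
  rw [this]
  field_simp
  ring
end

section
/- For a real function φ that is four times differentiable at t, define I[φ](t) = (φ'(t)²·φ⁽⁴⁾(t) − 4·φ'(t)·φ''(t)·φ'''(t) + 3·φ''(t)³)² / (2·φ'(t)·φ'''(t) − 3·φ''(t)²)³. Let A, B, a, b, c, d ∈ ℝ with B ≠ 0 and ad − bc = 1, let t₀ ∈ ℝ and set t₁ = A + B·t₀. Let ψ : ℝ → ℝ be four times continuously differentiable on an open neighborhood of t₁ with c·ψ + d nonvanishing on that neighborhood, and assume 2·ψ'(t₁)·ψ'''(t₁) − 3·ψ''(t₁)² ≠ 0. Define ψ₂(t) = sgn(B)·(a·ψ(A + B t) +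 b)/(c·ψ(A + B t) + d), where sgn(B) = B/|B|. Then 2·ψ₂'(t₀)·ψ₂'''(t₀) − 3·ψ₂''(t₀)² ≠ 0 and I[ψ₂](t₀) = I[ψ](t₁). -/
lemma hasDerivAt_iteratedDeriv_aux {ψ : ℝ → ℝ} {U : Set ℝ} (hU : IsOpen U)
    (hψ : ContDiffOn ℝ 4 ψ U) {k : ℕ} (hk : k < 4) {x : ℝ} (hx : x ∈ U) :
    HasDerivAt (iteratedDeriv k ψ) (iteratedDeriv (k + 1) ψ x) x := by
  have heq : ∀ m : ℕ, ∀ y ∈ U, iteratedDerivWithin m ψ U y = iteratedDeriv m ψ y := by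
    intro m y hy
    rw [iteratedDerivWithin_eq_iteratedFDerivWithin, iteratedDeriv_eq_iteratedFDeriv,
      iteratedFDerivWithin_of_isOpen m hU hy]
  have hnb : U ∈ nhds x := hU.mem_nhds hx
  have hdiff : DifferentiableAt ℝ (iteratedDerivWithin k ψ U) x :=
    ((hψ.differentiableOn_iteratedDerivWithin (by exact_mod_cast hk) hU.uniqueDiffOn) x
      hx).differentiableAt hnb
  have hval : deriv (iteratedDerivWithin k ψ U) x = iteratedDeriv (k + 1) ψ x := by
    rw [← derivWithin_of_mem_nhds hnb, ← iteratedDerivWithin_succ,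
      heq (k + 1) x hx]
  have h1 : HasDerivAt (iteratedDerivWithin k ψ U) (iteratedDeriv (k + 1) ψ x) x := by
    rw [← hval]; exact hdiff.hasDerivAt
  refine h1.congr_of_eventuallyEq ?_
  exact Filter.eventuallyEq_of_mem hnb fun y hy => (heq k y hy).symm

/-- The first generating differential invariant
`I[φ] = (φ'²φ⁽⁴⁾ - 4φ'φ''φ''' + 3φ''³)² / (2φ'φ''' - 3φ''²)³`. -/
noncomputable def invI (φ : ℝ → ℝ) (t : ℝ) : ℝ :=
  ((deriv φ t) ^ 2 * iteratedDeriv 4 φ t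
      - 4 * deriv φ t * iteratedDeriv 2 φ t * iteratedDeriv 3 φ t
      + 3 * (iteratedDeriv 2 φ t) ^ 3) ^ 2 /
    (2 * deriv φ t * iteratedDeriv 3 φ t - 3 * (iteratedDeriv 2 φ t) ^ 2) ^ 3

set_option maxHeartbeats 1000000 in
/-- Invariance of `I` under the action `ψ₂(t) = sgn(B)·(aψ(A+Bt)+b)/(cψ(A+Bt)+d)`
of `SAff₁(ℝ) × PSL₂(ℝ) × ℤ₂`. -/
theorem stmt_6 (A B a b c d : ℝ) (hB : B ≠ 0) (hdet : a * d - b * c = 1)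
    (t₀ t₁ : ℝ) (ht₁ : t₁ = A + B * t₀)
    (ψ : ℝ → ℝ) (U : Set ℝ) (hU : IsOpen U) (ht₁U : t₁ ∈ U)
    (hψ : ContDiffOn ℝ 4 ψ U) (hcd : ∀ x ∈ U, c * ψ x + d ≠ 0)
    (hnd : 2 * deriv ψ t₁ * iteratedDeriv 3 ψ t₁ - 3 * (iteratedDeriv 2 ψ t₁) ^ 2 ≠ 0)
    (ψ₂ : ℝ → ℝ)
    (hψ₂ : ∀ t, ψ₂ t = (B / |B|) * ((a * ψ (A + B * t) + b) / (c * ψ (A + B * t) + d))) :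
    2 * deriv ψ₂ t₀ * iteratedDeriv 3 ψ₂ t₀ - 3 * (iteratedDeriv 2 ψ₂ t₀) ^ 2 ≠ 0 ∧
      invI ψ₂ t₀ = invI ψ t₁ := by
  obtain ⟨ε, hε, rfl⟩ : ∃ ε : ℝ, (ε = 1 ∨ ε = -1) ∧
      ψ₂ = fun t => ε * ((a * ψ (A + B * t) + b) / (c * ψ (A + B * t) + d)) := by
    refine ⟨B / |B|, ?_, funext hψ₂⟩
    rcases abs_choice B with h | h
    · left; rw [h, div_self hB]
    · right; rw [h]; field_simp
  clear hψ₂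
  -- the preimage neighborhood
  set V : Set ℝ := (fun x => A + B * x) ⁻¹' U with hVdef
  have hV : IsOpen V := hU.preimage (by fun_prop)
  have ht₀V : t₀ ∈ V := by simp only [hVdef, Set.mem_preimage]; rw [← ht₁]; exact ht₁U
  have hQne : ∀ x ∈ V, c * ψ (A + B * x) + d ≠ 0 := fun x hx => hcd _ hx
  have hL : ∀ x : ℝ, HasDerivAt (fun y => A + B * y) B x := by
    intro x
    simpa using ((hasDerivAt_id x).const_mul B).const_add A
  have hcomp : ∀ k : ℕ, k < 4 → ∀ x ∈ V, HasDerivAt (fun y => iteratedDeriv k ψ (A + B * y))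
      (B * iteratedDeriv (k + 1) ψ (A + B * x)) x := by
    intro k hk x hx
    have := (hasDerivAt_iteratedDeriv_aux hU hψ hk hx).comp x (hL x)
    exact this.congr_deriv (mul_comm _ _)
  have hcomp0 : ∀ x ∈ V, HasDerivAt (fun y => ψ (A + B * y))
      (B * iteratedDeriv 1 ψ (A + B * x)) x := by
    intro x hx
    simpa [iteratedDeriv_zero] using hcomp 0 (by norm_num) x hx
  -- derivative formula functions
  set e1 : ℝ → ℝ := fun y => ε * B * iteratedDeriv 1 ψ (A + B * y) /
    (c * ψ (A + B * y) + d) ^ 2 with he1def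
  set e2 : ℝ → ℝ := fun y => ε * B ^ 2 * (iteratedDeriv 2 ψ (A + B * y) *
      (c * ψ (A + B * y) + d) - 2 * c * iteratedDeriv 1 ψ (A + B * y) ^ 2) /
    (c * ψ (A + B * y) + d) ^ 3 with he2def
  set e3 : ℝ → ℝ := fun y => ε * B ^ 3 * (iteratedDeriv 3 ψ (A + B * y) *
      (c * ψ (A + B * y) + d) ^ 2 - 6 * c * iteratedDeriv 1 ψ (A + B * y) *
      iteratedDeriv 2 ψ (A + B * y) * (c * ψ (A + B * y) + d) +
      6 * c ^ 2 * iteratedDeriv 1 ψ (A + B * y) ^ 3) /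
    (c * ψ (A + B * y) + d) ^ 4 with he3def
  set e4 : ℝ → ℝ := fun y => ε * B ^ 4 * (iteratedDeriv 4 ψ (A + B * y) *
      (c * ψ (A + B * y) + d) ^ 3 - 8 * c * iteratedDeriv 1 ψ (A + B * y) *
      iteratedDeriv 3 ψ (A + B * y) * (c * ψ (A + B * y) + d) ^ 2 -
      6 * c * iteratedDeriv 2 ψ (A + B * y) ^ 2 * (c * ψ (A + B * y) + d) ^ 2 +
      36 * c ^ 2 * iteratedDeriv 1 ψ (A + B * y) ^ 2 * iteratedDeriv 2 ψ (A + B * y) *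
      (c * ψ (A + B * y) + d) - 24 * c ^ 3 * iteratedDeriv 1 ψ (A + B * y) ^ 4) /
    (c * ψ (A + B * y) + d) ^ 5 with he4def
  have h1 : ∀ x ∈ V, HasDerivAt
      (fun t => ε * ((a * ψ (A + B * t) + b) / (c * ψ (A + B * t) + d))) (e1 x) x := by
    intro x hx
    have hnum : HasDerivAt (fun y => a * ψ (A + B * y) + b)
        (a * (B * iteratedDeriv 1 ψ (A + B * x))) x := ((hcomp0 x hx).const_mul a).add_const b
    have hden : HasDerivAt (fun y => c * ψ (A + B * y) + d)
        (c * (B * iteratedDeriv 1 ψ (A + B * x))) x := ((hcomp0 x hx).const_mul c).add_const d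
    have := (hnum.div hden (hQne x hx)).const_mul ε
    refine this.congr_deriv (Eq.symm ?_)
    have hq := hQne x hx
    rw [he1def]
    simp only [iteratedDeriv_one]
    field_simp
    linear_combination (-(ε * deriv ψ (A + B * x))) * hdet
  have h2 : ∀ x ∈ V, HasDerivAt e1 (e2 x) x := by
    intro x hx
    have hq := hQne x hx
    have hnum : HasDerivAt (fun y => ε * B * iteratedDeriv 1 ψ (A + B * y))
        (ε * B * (B * iteratedDeriv 2 ψ (A + B * x))) x :=
      (hcomp 1 (by norm_num) x hx).const_mul (ε * B)
    have hden : HasDerivAt (fun y => (c * ψ (A + B * y) + d) ^ 2)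
        (2 * (c * ψ (A + B * x) + d) ^ 1 * (c * (B * iteratedDeriv 1 ψ (A + B * x)))) x :=
      (((hcomp0 x hx).const_mul c).add_const d).pow 2
    have := hnum.div hden (pow_ne_zero 2 hq)
    refine this.congr_deriv (Eq.symm ?_)
    rw [he2def]
    field_simp
  have h3 : ∀ x ∈ V, HasDerivAt e2 (e3 x) x := by
    intro x hx
    have hq := hQne x hx
    have hQd : HasDerivAt (fun y => c * ψ (A + B * y) + d)
        (c * (B * iteratedDeriv 1 ψ (A + B * x))) x := ((hcomp0 x hx).const_mul c).add_const d
    have hnum : HasDerivAt (fun y => ε * B ^ 2 * (iteratedDeriv 2 ψ (A + B * y) *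
        (c * ψ (A + B * y) + d) - 2 * c * iteratedDeriv 1 ψ (A + B * y) ^ 2))
        (ε * B ^ 2 * ((B * iteratedDeriv 3 ψ (A + B * x)) * (c * ψ (A + B * x) + d) +
          iteratedDeriv 2 ψ (A + B * x) * (c * (B * iteratedDeriv 1 ψ (A + B * x))) -
          2 * c * (2 * iteratedDeriv 1 ψ (A + B * x) ^ 1 *
            (B * iteratedDeriv 2 ψ (A + B * x))))) x := by
      exact (((hcomp 2 (by norm_num) x hx).mul hQd).sub
        (((hcomp 1 (by norm_num) x hx).pow 2).const_mul (2 * c))).const_mul (ε * B ^ 2)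
    have hden : HasDerivAt (fun y => (c * ψ (A + B * y) + d) ^ 3)
        (3 * (c * ψ (A + B * x) + d) ^ 2 * (c * (B * iteratedDeriv 1 ψ (A + B * x)))) x :=
      hQd.pow 3
    have := hnum.div hden (pow_ne_zero 3 hq)
    refine this.congr_deriv (Eq.symm ?_)
    rw [he3def]
    field_simp
    ring
  have h4 : ∀ x ∈ V, HasDerivAt e3 (e4 x) x := by
    intro x hx
    have hq := hQne x hx
    have hQd : HasDerivAt (fun y => c * ψ (A + B * y) + d)
        (c * (B * iteratedDeriv 1 ψ (A + B * x))) x := ((hcomp0 x hx).const_mul c).add_const d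
    have hp1 := hcomp 1 (by norm_num) x hx
    have hp2 := hcomp 2 (by norm_num) x hx
    have hp3 := hcomp 3 (by norm_num) x hx
    have hnum : HasDerivAt (fun y => ε * B ^ 3 * (iteratedDeriv 3 ψ (A + B * y) *
        (c * ψ (A + B * y) + d) ^ 2 - 6 * c * iteratedDeriv 1 ψ (A + B * y) *
        iteratedDeriv 2 ψ (A + B * y) * (c * ψ (A + B * y) + d) +
        6 * c ^ 2 * iteratedDeriv 1 ψ (A + B * y) ^ 3))
        (ε * B ^ 3 * ((B * iteratedDeriv 4 ψ (A + B * x)) * (c * ψ (A + B * x) + d) ^ 2 +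
          iteratedDeriv 3 ψ (A + B * x) * (2 * (c * ψ (A + B * x) + d) ^ 1 *
            (c * (B * iteratedDeriv 1 ψ (A + B * x)))) -
          ((6 * c * (B * iteratedDeriv 2 ψ (A + B * x)) * iteratedDeriv 2 ψ (A + B * x) +
            6 * c * iteratedDeriv 1 ψ (A + B * x) * (B * iteratedDeriv 3 ψ (A + B * x))) *
            (c * ψ (A + B * x) + d) +
            6 * c * iteratedDeriv 1 ψ (A + B * x) * iteratedDeriv 2 ψ (A + B * x) *
            (c * (B * iteratedDeriv 1 ψ (A + B * x)))) +
          6 * c ^ 2 * (3 * iteratedDeriv 1 ψ (A + B * x) ^ 2 *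
            (B * iteratedDeriv 2 ψ (A + B * x))))) x := by
      exact (((hp3.mul (hQd.pow 2)).sub
        ((((hp1.const_mul (6 * c)).mul hp2).mul hQd))).add
        ((hp1.pow 3).const_mul (6 * c ^ 2))).const_mul (ε * B ^ 3)
    have hden : HasDerivAt (fun y => (c * ψ (A + B * y) + d) ^ 4)
        (4 * (c * ψ (A + B * x) + d) ^ 3 * (c * (B * iteratedDeriv 1 ψ (A + B * x)))) x :=
      hQd.pow 4
    have := hnum.div hden (pow_ne_zero 4 hq)
    refine this.congr_deriv (Eq.symm ?_)
    rw [he4def]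
    field_simp
    ring
  -- identify iterated derivatives of ψ₂
  have hev1 : ∀ y ∈ V, deriv (fun t => ε * ((a * ψ (A + B * t) + b) /
      (c * ψ (A + B * t) + d))) y = e1 y := fun y hy => (h1 y hy).deriv
  have hev2 : ∀ y ∈ V, iteratedDeriv 2 (fun t => ε * ((a * ψ (A + B * t) + b) /
      (c * ψ (A + B * t) + d))) y = e2 y := by
    intro y hy
    have heq : deriv (fun t => ε * ((a * ψ (A + B * t) + b) / (c * ψ (A + B * t) + d)))
        =ᶠ[nhds y] e1 := Filter.eventually_of_mem (hV.mem_nhds hy) hev1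
    rw [show (2 : ℕ) = 1 + 1 from rfl, iteratedDeriv_succ, iteratedDeriv_one,
      heq.deriv_eq, (h2 y hy).deriv]
  have hev3 : ∀ y ∈ V, iteratedDeriv 3 (fun t => ε * ((a * ψ (A + B * t) + b) /
      (c * ψ (A + B * t) + d))) y = e3 y := by
    intro y hy
    have heq : iteratedDeriv 2 (fun t => ε * ((a * ψ (A + B * t) + b) /
        (c * ψ (A + B * t) + d))) =ᶠ[nhds y] e2 :=
      Filter.eventually_of_mem (hV.mem_nhds hy) hev2
    rw [show (3 : ℕ) = 2 + 1 from rfl, iteratedDeriv_succ, heq.deriv_eq, (h3 y hy).deriv]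
  have hev4 : iteratedDeriv 4 (fun t => ε * ((a * ψ (A + B * t) + b) /
      (c * ψ (A + B * t) + d))) t₀ = e4 t₀ := by
    have heq : iteratedDeriv 3 (fun t => ε * ((a * ψ (A + B * t) + b) /
        (c * ψ (A + B * t) + d))) =ᶠ[nhds t₀] e3 :=
      Filter.eventually_of_mem (hV.mem_nhds ht₀V) hev3
    rw [show (4 : ℕ) = 3 + 1 from rfl, iteratedDeriv_succ, heq.deriv_eq, (h4 t₀ ht₀V).deriv]
  -- abbreviations for ψ data at t₁
  have hAB : A + B * t₀ = t₁ := ht₁.symm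
  set P1 := iteratedDeriv 1 ψ t₁ with hP1
  set P2 := iteratedDeriv 2 ψ t₁ with hP2
  set P3 := iteratedDeriv 3 ψ t₁ with hP3
  set P4 := iteratedDeriv 4 ψ t₁ with hP4
  set Q := c * ψ t₁ + d with hQdef
  have hQ0 : Q ≠ 0 := hcd t₁ ht₁U
  have hP1d : deriv ψ t₁ = P1 := by rw [hP1, iteratedDeriv_one]
  have hD : 2 * P1 * P3 - 3 * P2 ^ 2 ≠ 0 := by rw [← hP1d] at *; exact hnd
  have hE1 : e1 t₀ = ε * B * P1 / Q ^ 2 := by rw [he1def]; simp only [hAB]; rfl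
  have hE2 : e2 t₀ = ε * B ^ 2 * (P2 * Q - 2 * c * P1 ^ 2) / Q ^ 3 := by
    rw [he2def]; simp only [hAB]; rfl
  have hE3 : e3 t₀ = ε * B ^ 3 * (P3 * Q ^ 2 - 6 * c * P1 * P2 * Q + 6 * c ^ 2 * P1 ^ 3) /
      Q ^ 4 := by rw [he3def]; simp only [hAB]; rfl
  have hE4 : e4 t₀ = ε * B ^ 4 * (P4 * Q ^ 3 - 8 * c * P1 * P3 * Q ^ 2 -
      6 * c * P2 ^ 2 * Q ^ 2 + 36 * c ^ 2 * P1 ^ 2 * P2 * Q - 24 * c ^ 3 * P1 ^ 4) / Q ^ 5 := by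
    rw [he4def]; simp only [hAB]; rfl
  have hd1 : deriv (fun t => ε * ((a * ψ (A + B * t) + b) / (c * ψ (A + B * t) + d))) t₀ =
      e1 t₀ := hev1 t₀ ht₀V
  have hd2 := hev2 t₀ ht₀V
  have hd3 := hev3 t₀ ht₀V
  -- key algebraic identities
  have keyD : 2 * e1 t₀ * e3 t₀ - 3 * (e2 t₀) ^ 2 =
      B ^ 4 * (2 * P1 * P3 - 3 * P2 ^ 2) / Q ^ 4 := by
    rw [hE1, hE2, hE3]
    rcases hε with h | h <;> rw [h] <;> field_simp <;> ring
  have keyN : (e1 t₀) ^ 2 * e4 t₀ - 4 * e1 t₀ * e2 t₀ * e3 t₀ + 3 * (e2 t₀) ^ 3 =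
      ε * B ^ 6 * (P1 ^ 2 * P4 - 4 * P1 * P2 * P3 + 3 * P2 ^ 3) / Q ^ 6 := by
    rw [hE1, hE2, hE3, hE4]
    rcases hε with h | h <;> rw [h] <;> field_simp <;> ring
  have hDne : B ^ 4 * (2 * P1 * P3 - 3 * P2 ^ 2) / Q ^ 4 ≠ 0 :=
    div_ne_zero (mul_ne_zero (pow_ne_zero 4 hB) hD) (pow_ne_zero 4 hQ0)
  constructor
  · rw [hd1, hd2, hd3, keyD]; exact hDne
  · rw [invI, invI, hd1, hd2, hd3, hev4, keyN, keyD, hP1d]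
    rcases hε with h | h <;> rw [h] <;> field_simp <;> ring
end

section
/- For twice differentiable functions a, c : ℝ → ℝ define, at a point w with a'(w) ≠ 0: I[a,c](w) = (a(w)·c'(w) − c(w)·a'(w))·a(w)⁴/a'(w)⁴, J[a](w) = a(w)·a''(w)/a'(w)², and K[a,c](w) = (a(w)·c''(w) − c(w)·a''(w))·a(w)⁵/a'(w)⁵. Let A₁, A₂ ∈ ℝ and A₃, A₄ ∈ ℝ∖{0}, and define ã(u) = a(w)/(A₃·A₄²) and c̃(u) = c(w)/(A₃²·A₄) − A₂·a(w)/(A₃·A₄²), where w = (u − A₁)/(A₃·A₄). Then at every u for which a'(w) ≠ 0: ã'(u) ≠ 0, I[ã,c̃](u) = I[a,c](w), J[ã](u) = J[a](w), and K[ã,c̃](u) = K[a,c](w). -/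
private lemma Lcomp8 (g : ℝ → ℝ) (hg : ∀ w, DifferentiableAt ℝ g w) (A₁ s : ℝ) :
    deriv (fun u => g ((u - A₁) / s)) = fun u => deriv g ((u - A₁) / s) / s := by
  funext u
  have h1 : HasDerivAt (fun u : ℝ => (u - A₁) / s) (1 / s) u := by
    simpa using ((hasDerivAt_id u).sub_const A₁).div_const s
  have h2 := ((hg _).hasDerivAt.comp u h1)
  simpa [div_eq_mul_inv, mul_comm, Function.comp_def] using h2.deriv

/-- `I[a,c](w) = (a·c' − c·a')·a⁴/a'⁴`. -/
noncomputable def invI8 (a c : ℝ → ℝ) (w : ℝ) : ℝ :=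
  (a w * deriv c w - c w * deriv a w) * (a w) ^ 4 / (deriv a w) ^ 4

/-- `J[a](w) = a·a''/a'²`. -/
noncomputable def invJ8 (a : ℝ → ℝ) (w : ℝ) : ℝ :=
  a w * deriv (deriv a) w / (deriv a w) ^ 2

/-- `K[a,c](w) = (a·c'' − c·a'')·a⁵/a'⁵`. -/
noncomputable def invK8 (a c : ℝ → ℝ) (w : ℝ) : ℝ :=
  (a w * deriv (deriv c) w - c w * deriv (deriv a) w) * (a w) ^ 5 / (deriv a w) ^ 5

/-- Invariance of `I`, `J`, `K` under the group action
`(u, a, c) ↦ (A₃A₄u + A₁, a/(A₃A₄²), c/(A₃²A₄) − A₂a/(A₃A₄²))`. -/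
theorem stmt_8 (a c : ℝ → ℝ)
    (ha1 : ∀ w, DifferentiableAt ℝ a w) (ha2 : ∀ w, DifferentiableAt ℝ (deriv a) w)
    (hc1 : ∀ w, DifferentiableAt ℝ c w) (hc2 : ∀ w, DifferentiableAt ℝ (deriv c) w)
    (A₁ A₂ A₃ A₄ : ℝ) (hA₃ : A₃ ≠ 0) (hA₄ : A₄ ≠ 0)
    (a2 c2 : ℝ → ℝ)
    (ha2' : ∀ u, a2 u = a ((u - A₁) / (A₃ * A₄)) / (A₃ * A₄ ^ 2))
    (hc2' : ∀ u, c2 u = c ((u - A₁) / (A₃ * A₄)) / (A₃ ^ 2 * A₄)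
        - A₂ * a ((u - A₁) / (A₃ * A₄)) / (A₃ * A₄ ^ 2)) :
    ∀ u : ℝ, deriv a ((u - A₁) / (A₃ * A₄)) ≠ 0 →
      deriv a2 u ≠ 0 ∧
      invI8 a2 c2 u = invI8 a c ((u - A₁) / (A₃ * A₄)) ∧
      invJ8 a2 u = invJ8 a ((u - A₁) / (A₃ * A₄)) ∧
      invK8 a2 c2 u = invK8 a c ((u - A₁) / (A₃ * A₄)) := by
  set s := A₃ * A₄ with hs
  set k := A₃ * A₄ ^ 2 with hk
  set l := A₃ ^ 2 * A₄ with hl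
  set b : ℝ → ℝ := fun w => a w / k with hb
  set d : ℝ → ℝ := fun w => c w / l - A₂ * a w / k with hd
  have hbd : ∀ w, HasDerivAt b (deriv a w / k) w := fun w => (ha1 w).hasDerivAt.div_const k
  have hdb : deriv b = fun w => deriv a w / k := funext fun w => (hbd w).deriv
  have hdd : ∀ w, HasDerivAt d (deriv c w / l - A₂ * deriv a w / k) w := fun w =>
    (((hc1 w).hasDerivAt.div_const l).sub
      (((ha1 w).hasDerivAt.const_mul A₂).div_const k))
  have hddf : deriv d = fun w => deriv c w / l - A₂ * deriv a w / k :=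
    funext fun w => (hdd w).deriv
  have hb1 : ∀ w, DifferentiableAt ℝ b w := fun w => (hbd w).differentiableAt
  have hd1 : ∀ w, DifferentiableAt ℝ d w := fun w => (hdd w).differentiableAt
  have hb2 : ∀ w, DifferentiableAt ℝ (deriv b) w := by
    rw [hdb]; exact fun w => (ha2 w).div_const k
  have hd2 : ∀ w, DifferentiableAt ℝ (deriv d) w := by
    rw [hddf]; exact fun w =>
      ((hc2 w).div_const l).sub (((ha2 w).const_mul A₂).div_const k)
  have hdb2 : deriv (deriv b) = fun w => deriv (deriv a) w / k := by
    rw [hdb]; exact funext fun w => by rw [deriv_div_const]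
  have hdd2 : deriv (deriv d) = fun w => deriv (deriv c) w / l - A₂ * deriv (deriv a) w / k := by
    rw [hddf]; funext w
    exact (((hc2 w).hasDerivAt.div_const l).sub
      (((ha2 w).hasDerivAt.const_mul A₂).div_const k)).deriv
  have ha2f : a2 = fun u => b ((u - A₁) / s) := funext fun u => ha2' u
  have hc2f : c2 = fun u => d ((u - A₁) / s) := funext fun u => hc2' u
  have hda2 : deriv a2 = fun u => deriv b ((u - A₁) / s) / s := by
    rw [ha2f]; exact Lcomp8 b hb1 A₁ s
  have hdc2 : deriv c2 = fun u => deriv d ((u - A₁) / s) / s := by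
    rw [hc2f]; exact Lcomp8 d hd1 A₁ s
  have hdda2 : deriv (deriv a2) = fun u => deriv (deriv b) ((u - A₁) / s) / s / s := by
    rw [hda2]
    have h : (fun u => deriv b ((u - A₁) / s) / s)
        = fun u => (fun u => deriv b ((u - A₁) / s)) u / s := rfl
    rw [h]
    funext u
    rw [deriv_div_const, Lcomp8 (deriv b) hb2 A₁ s]
  have hddc2 : deriv (deriv c2) = fun u => deriv (deriv d) ((u - A₁) / s) / s / s := by
    rw [hdc2]
    have h : (fun u => deriv d ((u - A₁) / s) / s)
        = fun u => (fun u => deriv d ((u - A₁) / s)) u / s := rfl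
    rw [h]
    funext u
    rw [deriv_div_const, Lcomp8 (deriv d) hd2 A₁ s]
  intro u hne
  have hsn : s ≠ 0 := mul_ne_zero hA₃ hA₄
  have hkn : k ≠ 0 := mul_ne_zero hA₃ (pow_ne_zero 2 hA₄)
  have hln : l ≠ 0 := mul_ne_zero (pow_ne_zero 2 hA₃) hA₄
  set w := (u - A₁) / s with hw
  have e0 : a2 u = a w / k := ha2' u
  have e0c : c2 u = c w / l - A₂ * a w / k := hc2' u
  have e1 : deriv a2 u = deriv a w / k / s := by rw [hda2]; simp only [hdb]; rfl
  have e1c : deriv c2 u = (deriv c w / l - A₂ * deriv a w / k) / s := by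
    rw [hdc2]; simp only [hddf]; rfl
  have e2 : deriv (deriv a2) u = deriv (deriv a) w / k / s / s := by
    rw [hdda2]; simp only [hdb2]; rfl
  have e2c : deriv (deriv c2) u = (deriv (deriv c) w / l - A₂ * deriv (deriv a) w / k) / s / s := by
    rw [hddc2]; simp only [hdd2]; rfl
  have hkls : k * l = s ^ 3 := by rw [hk, hl, hs]; ring
  refine ⟨?_, ?_, ?_, ?_⟩
  · rw [e1]
    exact div_ne_zero (div_ne_zero hne hkn) hsn
  · simp only [invI8, e0, e0c, e1, e1c]
    rw [hk, hl, hs]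
    field_simp
    ring
  · simp only [invJ8, e0, e1, e2]
    field_simp
  · simp only [invK8, e0, e0c, e1, e2, e2c]
    rw [hk, hl, hs]
    field_simp
    ring
end

section
/- Let a, c : ℝ → ℝ with a continuously differentiable. Define H : ℝ³ → ℝ on coordinates (v,x,u) by H(v,x,u) = a(u)·v·x + (1/12)·a(u)²·x⁴ − (1/3)·a'(u)·x³ + c(u)·x. Then H satisfies the dispersionless-KP-type equation 2·∂_v∂_u H + ∂_x∂_x H − ∂_v(H·∂_v H) = 0 at every point of ℝ³. -/
/-- The function `H(v,x,u) = a(u)vx + (1/12)a(u)²x⁴ − (1/3)a'(u)x³ + c(u)x` satisfies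
the dispersionless-KP-type equation `2H_{vu} + H_{xx} − (H·H_v)_v = 0` at every point. -/
theorem stmt_11 (a a' c : ℝ → ℝ) (ha : ∀ u, HasDerivAt a (a' u) u)
    (ha' : Continuous a')
    (H : ℝ → ℝ → ℝ → ℝ)
    (hH : ∀ v x u, H v x u =
      a u * v * x + (1 / 12) * (a u) ^ 2 * x ^ 4 - (1 / 3) * a' u * x ^ 3 + c u * x) :
    ∃ Hv Hx Hvu Hxx HHvv : ℝ → ℝ → ℝ → ℝ,
      (∀ v x u, HasDerivAt (fun w => H w x u) (Hv v x u) v) ∧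
      (∀ v x u, HasDerivAt (fun w => Hv v x w) (Hvu v x u) u) ∧
      (∀ v x u, HasDerivAt (fun s => H v s u) (Hx v x u) x) ∧
      (∀ v x u, HasDerivAt (fun s => Hx v s u) (Hxx v x u) x) ∧
      (∀ v x u, HasDerivAt (fun w => H w x u * Hv w x u) (HHvv v x u) v) ∧
      (∀ v x u, 2 * Hvu v x u + Hxx v x u - HHvv v x u = 0) := by
  have hdv : ∀ v x u, HasDerivAt (fun w => H w x u) (a u * x) v := by
    intro v x u
    have h : (fun w => H w x u) = fun w =>
        a u * w * x + (1 / 12) * (a u) ^ 2 * x ^ 4 - (1 / 3) * a' u * x ^ 3 + c u * x := by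
      funext w; exact hH w x u
    rw [h]
    have h1 := ((hasDerivAt_id v).const_mul (a u)).mul_const x
    have := ((h1.add_const ((1 / 12) * (a u) ^ 2 * x ^ 4)).sub_const
      ((1 / 3) * a' u * x ^ 3)).add_const (c u * x)
    simpa using this
  refine ⟨fun _ x u => a u * x,
    fun v x u => a u * v + (a u) ^ 2 * x ^ 3 / 3 - a' u * x ^ 2 + c u,
    fun _ x u => a' u * x,
    fun _ x u => (a u) ^ 2 * x ^ 2 - 2 * (a' u * x),
    fun _ x u => (a u * x) ^ 2, hdv, ?_, ?_, ?_, ?_, ?_⟩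
  · intro v x u
    exact (ha u).mul_const x
  · intro v x u
    have h : (fun s => H v s u) = fun s =>
        a u * v * s + (1 / 12) * (a u) ^ 2 * s ^ 4 - (1 / 3) * a' u * s ^ 3 + c u * s := by
      funext s; exact hH v s u
    rw [h]
    have h1 := (hasDerivAt_id x).const_mul (a u * v)
    have h2 := (hasDerivAt_pow 4 x).const_mul ((1 / 12) * (a u) ^ 2)
    have h3 := (hasDerivAt_pow 3 x).const_mul ((1 / 3) * a' u)
    have h4 := (hasDerivAt_id x).const_mul (c u)
    have := ((h1.add h2).sub h3).add h4
    refine HasDerivAt.congr_deriv this ?_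
    push_cast; ring
  · intro v x u
    have h1 := ((hasDerivAt_pow 3 x).const_mul ((a u) ^ 2)).div_const 3
    have h2 := (hasDerivAt_pow 2 x).const_mul (a' u)
    have := ((h1.const_add (a u * v)).sub h2).add_const (c u)
    refine HasDerivAt.congr_deriv this ?_
    push_cast; ring
  · intro v x u
    have := (hdv v x u).mul_const (a u * x)
    refine HasDerivAt.congr_deriv this ?_
    show _ = (a u * x) ^ 2
    ring
  · intro v x u; ring
end

section
/- On ℝ³ with coordinates (t,v,u), define the vector field X(t,v,u) = (−u, t, 1) and, for s ∈ ℝ, the map φ_s : ℝ³ → ℝ³, φ_s(t,v,u) = (t − u·s − s²/2, v + t·s − u·s²/2 − s³/6, u + s). Then: (i) φ₀ is the identity; (ii) φ_{s₁} ∘ φ_{s₂} = φ_{s₁+s₂} for all s₁, s₂ ∈ ℝ; (iii) for every p ∈ ℝ³ and s ∈ ℝ, the derivative in s satisfies (d/ds) φ_s(p) = X(φ_s(p)); and (iv) writing φ_s(t,v,u) = (t', v', u'), one has 2t' + (u')² = 2t + u², so φ_s preserves the open set U = {(t,v,u) : 2t + u² > 0}. -/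
/-- The flow `φ_s` of the vector field `X = (−u, t, 1)` on `ℝ³` (coordinates `(t,v,u)`):
`φ₀ = id`, `φ_{s₁} ∘ φ_{s₂} = φ_{s₁+s₂}`, `(d/ds)φ_s(p) = X(φ_s(p))`, and `φ_s` preserves
the quantity `2t + u²`, hence the open set `U = {2t + u² > 0}`. -/
theorem stmt_12
    (X : ℝ × ℝ × ℝ → ℝ × ℝ × ℝ) (hX : ∀ p, X p = (-p.2.2, p.1, 1))
    (φ : ℝ → ℝ × ℝ × ℝ → ℝ × ℝ × ℝ)
    (hφ : ∀ s t v u, φ s (t, v, u) =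
      (t - u * s - s ^ 2 / 2, v + t * s - u * s ^ 2 / 2 - s ^ 3 / 6, u + s)) :
    (φ 0 = id) ∧
    (∀ s₁ s₂, φ s₁ ∘ φ s₂ = φ (s₁ + s₂)) ∧
    (∀ p s, HasDerivAt (fun s' => φ s' p) (X (φ s p)) s) ∧
    (∀ s t v u, 2 * (φ s (t, v, u)).1 + ((φ s (t, v, u)).2.2) ^ 2 = 2 * t + u ^ 2) ∧
    (∀ s, Set.MapsTo (φ s) {p : ℝ × ℝ × ℝ | 0 < 2 * p.1 + p.2.2 ^ 2}
        {p : ℝ × ℝ × ℝ | 0 < 2 * p.1 + p.2.2 ^ 2}) := by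
  have key : ∀ s t v u, 2 * (φ s (t, v, u)).1 + ((φ s (t, v, u)).2.2) ^ 2 = 2 * t + u ^ 2 := by
    intro s t v u; rw [hφ]; ring
  refine ⟨?_, ?_, ?_, key, ?_⟩
  · funext p
    obtain ⟨t, v, u⟩ := p
    simp [hφ]
  · intro s₁ s₂
    funext p
    obtain ⟨t, v, u⟩ := p
    simp only [Function.comp_apply, hφ]
    refine Prod.ext ?_ (Prod.ext ?_ ?_) <;> simp <;> ring
  · intro p s
    obtain ⟨t, v, u⟩ := p
    rw [hX, hφ]
    have : (fun s' => φ s' (t, v, u)) =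
        (fun s' : ℝ => (t - u * s' - s' ^ 2 / 2,
          v + t * s' - u * s' ^ 2 / 2 - s' ^ 3 / 6, u + s')) := by
      funext s'; rw [hφ]
    rw [this]
    have h1 : HasDerivAt (fun s' : ℝ => t - u * s' - s' ^ 2 / 2) (-(u + s)) s := by
      have := (((hasDerivAt_id s).const_mul u).const_sub t).sub
        ((hasDerivAt_pow 2 s).div_const 2)
      exact this.congr_deriv (by norm_num <;> ring)
    have h2 : HasDerivAt (fun s' : ℝ => v + t * s' - u * s' ^ 2 / 2 - s' ^ 3 / 6)
        (t - u * s - s ^ 2 / 2) s := by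
      have := (((hasDerivAt_id s).const_mul t).const_add v).sub
        (((hasDerivAt_pow 2 s).div_const 2).const_mul u) |>.sub
        ((hasDerivAt_pow 3 s).div_const 6)
      exact (this.congr_deriv (by norm_num <;> ring : _ = t - u * s - s ^ 2 / 2)).congr_of_eventuallyEq
        (Filter.Eventually.of_forall fun x => by simp only [Pi.sub_apply, id]; ring)
    have h3 : HasDerivAt (fun s' : ℝ => u + s') (1 : ℝ) s := by
      simpa using (hasDerivAt_id s).const_add u
    exact h1.prodMk (h2.prodMk h3)
  · intro s p hp
    obtain ⟨t, v, u⟩ := p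
    simp only [Set.mem_setOf_eq] at hp ⊢
    rw [key]; exact hp
end

section
/- Let m ≥ 0 be a natural number. The map Φ : (0,∞) × ℝ × ℝ^m × ℝ → ℝ × ℝ × ℝ^m × ℝ defined by Φ(r, w, y, s) = (r²·(1 − s²/2), r³·(w + s − s³/6), r²·y, r·s) is injective, and its image is exactly the set U = {(t, v, x, u) ∈ ℝ × ℝ × ℝ^m × ℝ : 2t + u² > 0}; i.e. Φ is a bijection from (0,∞) × ℝ × ℝ^m × ℝ onto U. -/
/-- The map `Φ(r,w,y,s) = (r²(1 − s²/2), r³(w + s − s³/6), r²y, rs)` is a bijection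
from `(0,∞) × ℝ × ℝ^m × ℝ` onto `U = {(t,v,x,u) | 2t + u² > 0}`. -/
theorem stmt_14 (m : ℕ)
    (Φ : (ℝ × ℝ × (Fin m → ℝ) × ℝ) → (ℝ × ℝ × (Fin m → ℝ) × ℝ))
    (hΦ : ∀ (r w : ℝ) (y : Fin m → ℝ) (s : ℝ), Φ (r, w, y, s) =
      (r ^ 2 * (1 - s ^ 2 / 2), r ^ 3 * (w + s - s ^ 3 / 6), r ^ 2 • y, r * s)) :
    Set.InjOn Φ {p : ℝ × ℝ × (Fin m → ℝ) × ℝ | 0 < p.1} ∧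
    Φ '' {p : ℝ × ℝ × (Fin m → ℝ) × ℝ | 0 < p.1}
      = {q : ℝ × ℝ × (Fin m → ℝ) × ℝ | 0 < 2 * q.1 + q.2.2.2 ^ 2} := by
  constructor
  · rintro ⟨r, w, y, s⟩ hr ⟨r', w', y', s'⟩ hr' h
    simp only [Set.mem_setOf_eq] at hr hr'
    rw [hΦ, hΦ, Prod.mk.injEq, Prod.mk.injEq, Prod.mk.injEq] at h
    obtain ⟨h1, h2, h3, h4⟩ := h
    have hrr : (r - r') * (r + r') = 0 := by
      linear_combination h1 + h4 * (r * s + r' * s') / 2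
    have hre : r = r' := by
      rcases mul_eq_zero.mp hrr with h | h
      · linarith
      · linarith
    subst hre
    have hrne : r ≠ 0 := ne_of_gt hr
    have hs : s = s' := mul_left_cancel₀ hrne h4
    subst hs
    have hy : y = y' := by
      have := congrArg (fun z => (r ^ 2)⁻¹ • z) h3
      simpa [smul_smul, inv_mul_cancel₀ (pow_ne_zero 2 hrne)] using this
    have hw : w = w' := by
      have h2' : w + s - s ^ 3 / 6 = w' + s - s ^ 3 / 6 :=
        mul_left_cancel₀ (pow_ne_zero 3 hrne) h2
      linarith
    simp [hy, hw]
  · ext ⟨t, v, x, u⟩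
    simp only [Set.mem_image, Set.mem_setOf_eq]
    constructor
    · rintro ⟨⟨r, w, y, s⟩, hr, hΦeq⟩
      simp only [Set.mem_setOf_eq] at hr
      rw [hΦ] at hΦeq
      rw [Prod.mk.injEq, Prod.mk.injEq, Prod.mk.injEq] at hΦeq
      obtain ⟨h1, h2, h3, h4⟩ := hΦeq
      have key : 2 * t + u ^ 2 = 2 * r ^ 2 := by rw [← h1, ← h4]; ring
      nlinarith [mul_pos hr hr]
    · intro hq
      set r := Real.sqrt ((2 * t + u ^ 2) / 2) with hrdef
      have hpos : (0:ℝ) < (2 * t + u ^ 2) / 2 := by linarith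
      have hr : 0 < r := Real.sqrt_pos.mpr hpos
      have hrne : r ≠ 0 := ne_of_gt hr
      have hr2 : r ^ 2 = (2 * t + u ^ 2) / 2 := Real.sq_sqrt hpos.le
      refine ⟨(r, v / r ^ 3 - u / r + (u / r) ^ 3 / 6, (r ^ 2)⁻¹ • x, u / r), hr, ?_⟩
      rw [hΦ]
      refine Prod.ext ?_ (Prod.ext ?_ (Prod.ext ?_ ?_))
      · show r ^ 2 * (1 - (u / r) ^ 2 / 2) = t
        field_simp
        nlinarith [hr2]
      · show r ^ 3 * (v / r ^ 3 - u / r + (u / r) ^ 3 / 6 + u / r - (u / r) ^ 3 / 6) = v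
        field_simp
        ring
      · show r ^ 2 • ((r ^ 2)⁻¹ • x) = x
        rw [smul_smul, mul_inv_cancel₀ (pow_ne_zero 2 hrne), one_smul]
      · show r * (u / r) = u
        exact mul_div_cancel₀ u hrne
end

section
/- On ℝ⁴ with coordinates (t, v, x, u), define the vector fields Z₁(t,v,x,u) = (1,0,0,0), Z₂(t,v,x,u) = (2t, 6v, 3x, 0), Z₃(t,v,x,u) = (0,0,0,1), Z₄(t,v,x,u) = (0, 0, x, 2u), Z₅(t,v,x,u) = (0, −x²/2, u·x, u²), and define the Lie bracket of vector fields V, W : ℝ⁴ → ℝ⁴ by [V,W](p) = DW(p)(V(p)) − DV(p)(W(p)). Then [Z₁, Z₂] = 2Z₁, [Z₃, Z₄] = 2Z₃, [Z₃, Z₅] = Z₄, [Z₄, Z₅] = 2Z₅, and [Zᵢ, Zⱼ] = 0 for every i ∈ {1,2} and j ∈ {3,4,5}. In particular Z₁, Z₂ span a Lie algebra isomorphic to aff₁(ℝ), Z₃, Z₄, Z₅ span a Lie algebra isomorphic to sl₂(ℝ), and the five fields span their direct sum. -/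
/-- The Lie bracket of vector fields on `ℝ⁴`:
`[V,W](p) = DW(p)(V(p)) − DV(p)(W(p))`. -/
noncomputable def lieBracket (V W : ℝ × ℝ × ℝ × ℝ → ℝ × ℝ × ℝ × ℝ)
    (p : ℝ × ℝ × ℝ × ℝ) : ℝ × ℝ × ℝ × ℝ :=
  fderiv ℝ W p (V p) - fderiv ℝ V p (W p)

section Aux

abbrev R4' := ℝ × ℝ × ℝ × ℝ

noncomputable def πt' : R4' →L[ℝ] ℝ := ContinuousLinearMap.fst ℝ ℝ (ℝ × ℝ × ℝ)
noncomputable def πv' : R4' →L[ℝ] ℝ :=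
  (ContinuousLinearMap.fst ℝ ℝ (ℝ × ℝ)).comp (ContinuousLinearMap.snd ℝ ℝ (ℝ × ℝ × ℝ))
noncomputable def πx' : R4' →L[ℝ] ℝ :=
  (ContinuousLinearMap.fst ℝ ℝ ℝ).comp
    ((ContinuousLinearMap.snd ℝ ℝ (ℝ × ℝ)).comp (ContinuousLinearMap.snd ℝ ℝ (ℝ × ℝ × ℝ)))
noncomputable def πu' : R4' →L[ℝ] ℝ :=
  (ContinuousLinearMap.snd ℝ ℝ ℝ).comp
    ((ContinuousLinearMap.snd ℝ ℝ (ℝ × ℝ)).comp (ContinuousLinearMap.snd ℝ ℝ (ℝ × ℝ × ℝ)))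

noncomputable def L2' : R4' →L[ℝ] R4' :=
  ((2:ℝ) • πt').prod (((6:ℝ) • πv').prod (((3:ℝ) • πx').prod 0))

noncomputable def L4' : R4' →L[ℝ] R4' :=
  (0 : R4' →L[ℝ] ℝ).prod ((0 : R4' →L[ℝ] ℝ).prod (πx'.prod ((2:ℝ) • πu')))

noncomputable def L5' (p : R4') : R4' →L[ℝ] R4' :=
  (0 : R4' →L[ℝ] ℝ).prod
    (((-1/2:ℝ) • (p.2.2.1 • πx' + p.2.2.1 • πx')).prod
      ((p.2.2.2 • πx' + p.2.2.1 • πu').prod (p.2.2.2 • πu' + p.2.2.2 • πu')))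

lemma hD2' (p : R4') :
    HasFDerivAt (fun p : R4' => ((2*p.1 : ℝ), 6*p.2.1, 3*p.2.2.1, (0:ℝ))) L2' p :=
  L2'.hasFDerivAt

lemma hD4' (p : R4') :
    HasFDerivAt (fun p : R4' => ((0:ℝ), (0:ℝ), p.2.2.1, 2*p.2.2.2)) L4' p :=
  L4'.hasFDerivAt

lemma hx' (p : R4') : HasFDerivAt (fun p : R4' => p.2.2.1) πx' p := πx'.hasFDerivAt
lemma hu' (p : R4') : HasFDerivAt (fun p : R4' => p.2.2.2) πu' p := πu'.hasFDerivAt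

lemma hD5' (p : R4') :
    HasFDerivAt (fun p : R4' => ((0:ℝ), -p.2.2.1^2/2, p.2.2.2*p.2.2.1, p.2.2.2^2)) (L5' p) p := by
  have h2 : HasFDerivAt (fun p : R4' => -p.2.2.1^2/2)
      ((-1/2:ℝ) • (p.2.2.1 • πx' + p.2.2.1 • πx')) p := by
    have h := ((hx' p).mul (hx' p)).const_mul ((-1/2:ℝ))
    have e : (fun p : R4' => (-1/2:ℝ) * (p.2.2.1 * p.2.2.1)) = fun p : R4' => -p.2.2.1^2/2 := by
      funext q; ring
    exact h.congr_of_eventuallyEq (Filter.Eventually.of_forall fun q => by simp only [Pi.mul_apply]; ring)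
  have h3 : HasFDerivAt (fun p : R4' => p.2.2.2*p.2.2.1)
      (p.2.2.2 • πx' + p.2.2.1 • πu') p := (hu' p).mul (hx' p)
  have h4 : HasFDerivAt (fun p : R4' => p.2.2.2^2)
      (p.2.2.2 • πu' + p.2.2.2 • πu') p := by
    have h := (hu' p).mul (hu' p)
    exact h.congr_of_eventuallyEq (Filter.Eventually.of_forall fun q => by simp only [Pi.mul_apply]; ring)
  exact HasFDerivAt.prodMk (hasFDerivAt_const (0:ℝ) p) (h2.prodMk (h3.prodMk h4))

end Aux

/-- Bracket relations of the vector fields `Z₁ = ∂_t`, `Z₂ = 2t∂_t + 6v∂_v + 3x∂_x`,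
`Z₃ = ∂_u`, `Z₄ = x∂_x + 2u∂_u`, `Z₅ = −(x²/2)∂_v + ux∂_x + u²∂_u` on `ℝ⁴` with
coordinates `(t,v,x,u)`: `[Z₁,Z₂] = 2Z₁`, `[Z₃,Z₄] = 2Z₃`, `[Z₃,Z₅] = Z₄`,
`[Z₄,Z₅] = 2Z₅`, and `[Zᵢ,Zⱼ] = 0` for `i ∈ {1,2}`, `j ∈ {3,4,5}`; i.e. `Z₁, Z₂`
span a copy of `aff₁(ℝ)`, `Z₃, Z₄, Z₅` a copy of `sl₂(ℝ)`, and the five fields span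
their direct sum. -/
theorem stmt_16
    (Z₁ Z₂ Z₃ Z₄ Z₅ : ℝ × ℝ × ℝ × ℝ → ℝ × ℝ × ℝ × ℝ)
    (hZ₁ : ∀ p, Z₁ p = (1, 0, 0, 0))
    (hZ₂ : ∀ p, Z₂ p = (2 * p.1, 6 * p.2.1, 3 * p.2.2.1, 0))
    (hZ₃ : ∀ p, Z₃ p = (0, 0, 0, 1))
    (hZ₄ : ∀ p, Z₄ p = (0, 0, p.2.2.1, 2 * p.2.2.2))
    (hZ₅ : ∀ p, Z₅ p = (0, -p.2.2.1 ^ 2 / 2, p.2.2.2 * p.2.2.1, p.2.2.2 ^ 2)) :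
    (∀ p, lieBracket Z₁ Z₂ p = (2 : ℝ) • Z₁ p) ∧
    (∀ p, lieBracket Z₃ Z₄ p = (2 : ℝ) • Z₃ p) ∧
    (∀ p, lieBracket Z₃ Z₅ p = Z₄ p) ∧
    (∀ p, lieBracket Z₄ Z₅ p = (2 : ℝ) • Z₅ p) ∧
    (∀ p, lieBracket Z₁ Z₃ p = 0) ∧
    (∀ p, lieBracket Z₁ Z₄ p = 0) ∧
    (∀ p, lieBracket Z₁ Z₅ p = 0) ∧
    (∀ p, lieBracket Z₂ Z₃ p = 0) ∧
    (∀ p, lieBracket Z₂ Z₄ p = 0) ∧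
    (∀ p, lieBracket Z₂ Z₅ p = 0) := by
  have e1 : Z₁ = fun _ : R4' => ((1:ℝ), (0:ℝ), (0:ℝ), (0:ℝ)) := funext hZ₁
  have e2 : Z₂ = fun p : R4' => ((2*p.1 : ℝ), 6*p.2.1, 3*p.2.2.1, (0:ℝ)) := by
    funext p; simpa using hZ₂ p
  have e3 : Z₃ = fun _ : R4' => ((0:ℝ), (0:ℝ), (0:ℝ), (1:ℝ)) := funext hZ₃
  have e4 : Z₄ = fun p : R4' => ((0:ℝ), (0:ℝ), p.2.2.1, 2*p.2.2.2) := by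
    funext p; simpa using hZ₄ p
  have e5 : Z₅ = fun p : R4' => ((0:ℝ), -p.2.2.1^2/2, p.2.2.2*p.2.2.1, p.2.2.2^2) := by
    funext p; simpa using hZ₅ p
  subst e1 e2 e3 e4 e5
  have f2 : ∀ p : R4', fderiv ℝ (fun p : R4' => ((2*p.1 : ℝ), 6*p.2.1, 3*p.2.2.1, (0:ℝ))) p = L2' :=
    fun p => (hD2' p).fderiv
  have f4 : ∀ p : R4', fderiv ℝ (fun p : R4' => ((0:ℝ), (0:ℝ), p.2.2.1, 2*p.2.2.2)) p = L4' :=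
    fun p => (hD4' p).fderiv
  have f5 : ∀ p : R4',
      fderiv ℝ (fun p : R4' => ((0:ℝ), -p.2.2.1^2/2, p.2.2.2*p.2.2.1, p.2.2.2^2)) p = L5' p :=
    fun p => (hD5' p).fderiv
  refine ⟨?_, ?_, ?_, ?_, ?_, ?_, ?_, ?_, ?_, ?_⟩ <;> intro p <;>
    simp only [lieBracket, f2, f4, f5, fderiv_const, Pi.zero_apply,
      ContinuousLinearMap.zero_apply, L2', L4', L5', πt', πv', πx', πu',
      ContinuousLinearMap.prod_apply, ContinuousLinearMap.add_apply,
      ContinuousLinearMap.coe_smul', Pi.smul_apply, ContinuousLinearMap.coe_comp',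
      Function.comp_apply, ContinuousLinearMap.coe_fst', ContinuousLinearMap.coe_snd',
      smul_eq_mul, Prod.smul_mk, Prod.mk_sub_mk, sub_zero, zero_sub, Prod.mk_eq_zero,
      Prod.ext_iff] <;>
    and_intros
  all_goals try (first | trivial | ring1 | simp)
  all_goals norm_num [sub_eq_zero, mul_comm, mul_left_comm, mul_assoc]
  all_goals ring1
end

section
/- Let ψ : ℝ → ℝ be twice continuously differentiable with ψ'(t) > 0 for all t, and let Ω = {(t, v, x, u) ∈ ℝ⁴ : u + ψ(t) ≠ 0}. Define on Ω the function E(t,u) = ψ'(t)/(u + ψ(t))², the symmetric matrix-valued function g with components (in coordinates ordered (t,v,x,u)) g_{tt} = 1, g_{vu} = g_{uv} = E, g_{xx} = E and all other components zero, and the covector field ω with components ω_t = ψ'(t)/(u + ψ(t)) − ψ''(t)/(2ψ'(t)) and ω_v = ω_x = ω_u = 0. For a vector field Y = (Y^t, Y^v, Y^x, Y^u) on ℝ⁴ define (L_Y g)_{ij} = Σ_k (Y^k ∂_k g_{ij} + g_{kj} ∂_i Y^k + g_{ik} ∂_j Y^k) and (L_Y ω)_i = Σ_k (Y^k ∂_k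 ω_i + ω_k ∂_i Y^k). Then for each of the three vector fields Y = (0,1,0,0), Y = (0,0,1,0) and Y(t,v,x,u) = (0, x, −u, 0), one has (L_Y g)_{ij} = 0 and (L_Y ω)_i = 0 identically on Ω for all indices i, j. -/
/-- Directional (partial) derivative of a function on `ℝ⁴` along the vector `v`. -/
noncomputable def pd (v : ℝ × ℝ × ℝ × ℝ) (f : ℝ × ℝ × ℝ × ℝ → ℝ)
    (p : ℝ × ℝ × ℝ × ℝ) : ℝ :=
  deriv (fun s : ℝ => f (p + s • v)) 0

/-- The coordinate vector fields `∂_t, ∂_v, ∂_x, ∂_u` on `ℝ⁴` with coordinates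
ordered `(t,v,x,u)`. -/
noncomputable def e4 : Fin 4 → ℝ × ℝ × ℝ × ℝ :=
  ![(1, 0, 0, 0), (0, 1, 0, 0), (0, 0, 1, 0), (0, 0, 0, 1)]

/-- The coordinate Lie derivative of a symmetric 2-tensor `g` along a vector field `Y`:
`(L_Y g)_{ij} = Σ_k (Y^k ∂_k g_{ij} + g_{kj} ∂_i Y^k + g_{ik} ∂_j Y^k)`. -/
noncomputable def lieDerivG (Y : ℝ × ℝ × ℝ × ℝ → Fin 4 → ℝ)
    (g : ℝ × ℝ × ℝ × ℝ → Fin 4 → Fin 4 → ℝ) (p : ℝ × ℝ × ℝ × ℝ) (i j : Fin 4) : ℝ :=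
  ∑ k : Fin 4, (Y p k * pd (e4 k) (fun q => g q i j) p
    + g p k j * pd (e4 i) (fun q => Y q k) p
    + g p i k * pd (e4 j) (fun q => Y q k) p)

/-- The coordinate Lie derivative of a 1-form `ω` along a vector field `Y`:
`(L_Y ω)_i = Σ_k (Y^k ∂_k ω_i + ω_k ∂_i Y^k)`. -/
noncomputable def lieDerivOmega (Y : ℝ × ℝ × ℝ × ℝ → Fin 4 → ℝ)
    (ω : ℝ × ℝ × ℝ × ℝ → Fin 4 → ℝ) (p : ℝ × ℝ × ℝ × ℝ) (i : Fin 4) : ℝ :=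
  ∑ k : Fin 4, (Y p k * pd (e4 k) (fun q => ω q i) p
    + ω p k * pd (e4 i) (fun q => Y q k) p)

/-- For the canonical metric `h = dt² + E·(2dudv + dx²)`, `E = ψ'(t)/(u+ψ(t))²`, and the
1-form `ω_h = (ψ'(t)/(u+ψ(t)) − ψ''(t)/(2ψ'(t)))dt` of the local normal form of a
non-closed recurrent Lorentzian Weyl structure, the vector fields `∂_v`, `∂_x` and
`x∂_v − u∂_x` are Killing fields of `h` acting trivially on `ω_h`, on the domain
`Ω = {u + ψ(t) ≠ 0}`. -/
theorem stmt_19 (ψ ψd ψdd : ℝ → ℝ)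
    (hψ : ∀ t, HasDerivAt ψ (ψd t) t) (hψd : ∀ t, HasDerivAt ψd (ψdd t) t)
    (hψdd : Continuous ψdd) (hpos : ∀ t, 0 < ψd t)
    (Ω : Set (ℝ × ℝ × ℝ × ℝ)) (hΩ : Ω = {p | p.2.2.2 + ψ p.1 ≠ 0})
    (E : ℝ × ℝ × ℝ × ℝ → ℝ) (hE : ∀ p, E p = ψd p.1 / (p.2.2.2 + ψ p.1) ^ 2)
    (g : ℝ × ℝ × ℝ × ℝ → Fin 4 → Fin 4 → ℝ)
    (hg : ∀ p, g p = ![![(1 : ℝ), 0, 0, 0], ![0, 0, 0, E p], ![0, 0, E p, 0],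
      ![0, E p, 0, 0]])
    (ω : ℝ × ℝ × ℝ × ℝ → Fin 4 → ℝ)
    (hω : ∀ p, ω p = ![ψd p.1 / (p.2.2.2 + ψ p.1) - ψdd p.1 / (2 * ψd p.1), 0, 0, 0])
    (Y₁ Y₂ Y₃ : ℝ × ℝ × ℝ × ℝ → Fin 4 → ℝ)
    (hY₁ : ∀ p, Y₁ p = ![0, 1, 0, 0])
    (hY₂ : ∀ p, Y₂ p = ![0, 0, 1, 0])
    (hY₃ : ∀ p, Y₃ p = ![0, p.2.2.1, -p.2.2.2, 0]) :
    ∀ p ∈ Ω, ∀ i j : Fin 4,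
      lieDerivG Y₁ g p i j = 0 ∧ lieDerivG Y₂ g p i j = 0 ∧ lieDerivG Y₃ g p i j = 0 ∧
      lieDerivOmega Y₁ ω p i = 0 ∧ lieDerivOmega Y₂ ω p i = 0 ∧
      lieDerivOmega Y₃ ω p i = 0 := by
  intro p _hp i j
  -- shifting along a direction, coordinatewise
  have hshift : ∀ (v : ℝ × ℝ × ℝ × ℝ) (s : ℝ),
      p + s • v = (p.1 + s * v.1, p.2.1 + s * v.2.1,
        p.2.2.1 + s * v.2.2.1, p.2.2.2 + s * v.2.2.2) := fun v s => rfl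
  -- pd of a function constant along the direction is 0
  have hpd0 : ∀ (v : ℝ × ℝ × ℝ × ℝ) (f : ℝ × ℝ × ℝ × ℝ → ℝ),
      (∀ s : ℝ, f (p + s • v) = f p) → pd v f p = 0 := by
    intro v f h
    unfold pd
    rw [show (fun s : ℝ => f (p + s • v)) = fun _ => f p from funext h]
    exact deriv_const _ _
  have hlin : ∀ a c : ℝ, deriv (fun s : ℝ => a + s * c) 0 = c := by
    intro a c
    simpa using (((hasDerivAt_id (0 : ℝ)).mul_const c).const_add a).deriv
  have hlinneg : ∀ a c : ℝ, deriv (fun s : ℝ => -(a + s * c)) 0 = -c := by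
    intro a c
    simpa using ((((hasDerivAt_id (0 : ℝ)).mul_const c).const_add a).neg).deriv
  -- g is constant along directions with zero t and u components
  have hgA : ∀ (v : ℝ × ℝ × ℝ × ℝ), v.1 = 0 → v.2.2.2 = 0 →
      ∀ i j : Fin 4, pd v (fun q => g q i j) p = 0 := by
    intro v h1 h4 i j
    refine hpd0 v _ (fun s => ?_)
    rw [hshift, hg, hg, h1, h4, hE, hE]
    norm_num
  have hA1 : ∀ i j : Fin 4, pd (e4 1) (fun q => g q i j) p = 0 :=
    hgA (e4 1) rfl rfl
  have hA2 : ∀ i j : Fin 4, pd (e4 2) (fun q => g q i j) p = 0 :=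
    hgA (e4 2) rfl rfl
  -- ω is constant along directions with zero t component
  have hωA : ∀ (v : ℝ × ℝ × ℝ × ℝ), v.1 = 0 → v.2.2.2 = 0 →
      ∀ i : Fin 4, pd v (fun q => ω q i) p = 0 := by
    intro v h1 h4 i
    refine hpd0 v _ (fun s => ?_)
    rw [hshift, hω, hω, h1, h4]
    norm_num
  have hω1 : ∀ i : Fin 4, pd (e4 1) (fun q => ω q i) p = 0 := hωA (e4 1) rfl rfl
  have hω2 : ∀ i : Fin 4, pd (e4 2) (fun q => ω q i) p = 0 := hωA (e4 2) rfl rfl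
  have hpdconst : ∀ (v : ℝ × ℝ × ℝ × ℝ) (c : ℝ), pd v (fun _ => c) p = 0 :=
    fun v c => hpd0 v _ (fun _ => rfl)
  -- constant vector fields have vanishing derivatives
  have hc1 : ∀ (v : ℝ × ℝ × ℝ × ℝ) (k : Fin 4), pd v (fun q => Y₁ q k) p = 0 := by
    intro v k; exact hpd0 v _ (fun s => by rw [hY₁, hY₁])
  have hc2 : ∀ (v : ℝ × ℝ × ℝ × ℝ) (k : Fin 4), pd v (fun q => Y₂ q k) p = 0 := by
    intro v k; exact hpd0 v _ (fun s => by rw [hY₂, hY₂])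
  -- derivatives of the components of Y₃
  have hY3pd : ∀ (i k : Fin 4), pd (e4 i) (fun q => Y₃ q k) p
      = ![(0 : ℝ), (e4 i).2.2.1, -(e4 i).2.2.2, 0] k := by
    intro i k
    fin_cases k
    · simpa using hpd0 (e4 i) _ (fun s => by rw [hY₃, hY₃]; norm_num)
    · show pd (e4 i) (fun q => Y₃ q 1) p = (e4 i).2.2.1
      unfold pd
      have : (fun s : ℝ => Y₃ (p + s • e4 i) 1)
          = fun s : ℝ => p.2.2.1 + s * (e4 i).2.2.1 := by
        funext s; rw [hshift, hY₃]; norm_num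
      rw [this]; exact hlin _ _
    · show pd (e4 i) (fun q => Y₃ q 2) p = -(e4 i).2.2.2
      unfold pd
      have : (fun s : ℝ => Y₃ (p + s • e4 i) 2)
          = fun s : ℝ => -(p.2.2.2 + s * (e4 i).2.2.2) := by
        funext s; rw [hshift, hY₃]; norm_num; rfl
      rw [this]; exact hlinneg _ _
    · simpa using hpd0 (e4 i) _ (fun s => by rw [hY₃, hY₃]; norm_num; rfl)
  refine ⟨?_, ?_, ?_, ?_, ?_, ?_⟩
  · simp only [lieDerivG, Fin.sum_univ_four, hA1]
    simp [hY₁, hpdconst]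
  · simp only [lieDerivG, Fin.sum_univ_four, hA2]
    simp [hY₂, hpdconst]
  · fin_cases i <;> fin_cases j <;>
      · simp only [lieDerivG, Fin.sum_univ_four, hY3pd, hA1, hA2]
        simp [hY₃, hg, e4, hpdconst, Matrix.vecHead, Matrix.vecTail]
        try ring
  · simp only [lieDerivOmega, Fin.sum_univ_four, hω1]
    simp [hY₁, hω, hpdconst]
  · simp only [lieDerivOmega, Fin.sum_univ_four, hω2]
    simp [hY₂, hω, hpdconst]
  · simp only [lieDerivOmega, Fin.sum_univ_four, hY3pd, hω1, hω2]
    simp [hY₃, hω, e4, hpdconst, Matrix.vecHead, Matrix.vecTail]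
end
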